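/- Let k be a field of characteristic p > 0, let B be a commutative k-algebra that is of finite type over k, and let A be a k-subalgebra of B such that b^p ∈ A for every b ∈ B. Then A is a k-algebra of finite type, and B is a finitely generated A-module. -/

import Mathlib

/-- Let `k` be a field of characteristic `p > 0`, let `B` be a commutative
`k`-algebra of finite type over `k`, and let `A` be a `k`-subalgebra of `B` such that
`b ^ p ∈ A` for every `b ∈ B`. Then `A` is a `k`-algebra of finite type, and `B` is a
finitely generated `A`-module. -/
theorem subalgebra_containing_pth_powers_finiteType_and_finite
    (k : Type*) [Field k] (p : ℕ) (hp : 0 < p) [CharP k p]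
    (B : Type*) [CommRing B] [Algebra k B] (hB : Algebra.FiniteType k B)
    (A : Subalgebra k B) (hA : ∀ b : B, b ^ p ∈ A) :
    Algebra.FiniteType k A ∧ Module.Finite A B := by
  have hFT : Algebra.FiniteType A B := by
    have := hB
    exact Algebra.FiniteType.of_restrictScalars_finiteType k A B
  have hInt : Algebra.IsIntegral A B := by
    constructor
    intro b
    refine IsIntegral.of_pow hp ?_
    exact isIntegral_algebraMap (x := (⟨b ^ p, hA b⟩ : A))
  have hFin : Module.Finite A B := Algebra.IsIntegral.finite
  refine ⟨?_, hFin⟩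
  exact ⟨fg_of_fg_of_fg k (↥A) B hB.out hFin.fg_top Subtype.val_injective⟩
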